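/- Let P, Q be centred elliptical distributions on ℝ^d (i.e., with μ = 0) whose projections onto the line spanned by x agree for every x in some spanning set of ℝ^d. Then there exist a single continuous function ψ : [0,∞) → ℂ and positive semi-definite matrices Σ₁, Σ₂ such that φ_P(ξ) = ψ(ξᵀΣ₁ξ) and φ_Q(ξ) = ψ(ξᵀΣ₂ξ) for all ξ ∈ ℝ^d. -/

import Mathlib

open MeasureTheory

/-- The characteristic function of a measure on `ℝ^d`. -/
noncomputable def cf {d : ℕ} (P : Measure (EuclideanSpace ℝ (Fin d)))
    (ξ : EuclideanSpace ℝ (Fin d)) : ℂ :=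
  ∫ x, Complex.exp (((inner ℝ x ξ : ℝ) : ℂ) * Complex.I) ∂P

/-- The quadratic form `ξᵀ M ξ`. -/
noncomputable def qf {d : ℕ} (M : Matrix (Fin d) (Fin d) ℝ)
    (ξ : EuclideanSpace ℝ (Fin d)) : ℝ :=
  dotProduct (fun i => ξ i) (M.mulVec (fun i => ξ i))

/-- `P` is an elliptical distribution with location `μ`, scatter matrix `Sig`
and generator `ψ`. -/
def IsElliptical {d : ℕ} (P : Measure (EuclideanSpace ℝ (Fin d)))
    (μ : EuclideanSpace ℝ (Fin d)) (Sig : Matrix (Fin d) (Fin d) ℝ) (ψ : ℝ → ℂ) : Prop :=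
  IsProbabilityMeasure P ∧ Sig.PosSemidef ∧ ContinuousOn ψ (Set.Ici 0) ∧
    ∀ ξ, cf P ξ = Complex.exp (((inner ℝ μ ξ : ℝ) : ℂ) * Complex.I) * ψ (qf Sig ξ)

/-- The projection of `P` onto the line spanned by `x`: the pushforward of `P`
under the orthogonal projection onto `span {x}`. -/
noncomputable def projLine {d : ℕ} (P : Measure (EuclideanSpace ℝ (Fin d)))
    (x : EuclideanSpace ℝ (Fin d)) :
    Measure (Submodule.span ℝ ({x} : Set (EuclideanSpace ℝ (Fin d)))) :=
  P.map (Submodule.orthogonalProjectionOnto (Submodule.span ℝ {x}))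

/-! ### Auxiliary lemmas -/

lemma qf_nonneg {d : ℕ} {M : Matrix (Fin d) (Fin d) ℝ} (hM : M.PosSemidef)
    (ξ : EuclideanSpace ℝ (Fin d)) : 0 ≤ qf M ξ := by
  simpa [star_trivial, qf] using hM.dotProduct_mulVec_nonneg (fun i => ξ i)

lemma qf_zero_matrix {d : ℕ} (ξ : EuclideanSpace ℝ (Fin d)) :
    qf (0 : Matrix (Fin d) (Fin d) ℝ) ξ = 0 := by
  simp [qf]

lemma qf_smul_matrix {d : ℕ} (c : ℝ) (M : Matrix (Fin d) (Fin d) ℝ)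
    (ξ : EuclideanSpace ℝ (Fin d)) : qf (c • M) ξ = c * qf M ξ := by
  simp [qf, Matrix.smul_mulVec, dotProduct_smul]

lemma posSemidef_smul {d : ℕ} {M : Matrix (Fin d) (Fin d) ℝ} (hM : M.PosSemidef)
    {c : ℝ} (hc : 0 ≤ c) : (c • M).PosSemidef := by
  exact hM.smul hc

lemma qf_smul_vec {d : ℕ} (M : Matrix (Fin d) (Fin d) ℝ) (t : ℝ)
    (ξ : EuclideanSpace ℝ (Fin d)) : qf M (t • ξ) = t ^ 2 * qf M ξ := by
  have h : (fun i => (t • ξ) i) = t • (fun i => ξ i) := rfl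
  unfold qf
  rw [h, Matrix.mulVec_smul, smul_dotProduct, dotProduct_smul]
  ring_nf

lemma qf_zero_vec {d : ℕ} (M : Matrix (Fin d) (Fin d) ℝ) :
    qf M (0 : EuclideanSpace ℝ (Fin d)) = 0 := by
  have h : (fun i => (0 : EuclideanSpace ℝ (Fin d)) i) = (0 : Fin d → ℝ) := rfl
  unfold qf
  rw [h]
  simp

lemma cf_zero {d : ℕ} (P : Measure (EuclideanSpace ℝ (Fin d)))
    [IsProbabilityMeasure P] : cf P 0 = 1 := by
  unfold cf
  simp

/-- If the quadratic form of a PSD matrix vanishes on a spanning set, it vanishes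
everywhere. -/
lemma qf_eq_zero_of_span {d : ℕ} {M : Matrix (Fin d) (Fin d) ℝ} (hM : M.PosSemidef)
    {S : Set (EuclideanSpace ℝ (Fin d))} (hspan : Submodule.span ℝ S = ⊤)
    (h0 : ∀ x ∈ S, qf M x = 0) (ξ : EuclideanSpace ℝ (Fin d)) : qf M ξ = 0 := by
  have key : ∀ y : EuclideanSpace ℝ (Fin d), M.mulVec (fun i => y i) = 0 := by
    intro y
    have hy : y ∈ Submodule.span ℝ S := by rw [hspan]; trivial
    induction hy using Submodule.span_induction with
    | mem x hx =>
      refine (hM.dotProduct_mulVec_zero_iff _).mp ?_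
      simpa [star_trivial, qf] using h0 x hx
    | zero => exact Matrix.mulVec_zero M
    | add a b _ _ ha hb =>
      have h : (fun i => (a + b) i) = (fun i => a i) + (fun i => b i) := rfl
      rw [h, Matrix.mulVec_add, ha, hb, add_zero]
    | smul c a _ ha =>
      have h : (fun i => (c • a) i) = c • (fun i => a i) := rfl
      rw [h, Matrix.mulVec_smul, ha, smul_zero]
  unfold qf
  rw [key ξ]
  simp

/-- Equality of the line projections gives equality of characteristic functions
along the line. -/
lemma cf_line_eq {d : ℕ} (P Q : Measure (EuclideanSpace ℝ (Fin d)))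
    (x : EuclideanSpace ℝ (Fin d)) (h : projLine P x = projLine Q x) (t : ℝ) :
    cf P (t • x) = cf Q (t • x) := by
  set K := Submodule.span ℝ ({x} : Set (EuclideanSpace ℝ (Fin d))) with hK
  have hmem : t • x ∈ K := Submodule.smul_mem _ t (Submodule.mem_span_singleton_self x)
  have hinner : ∀ y : EuclideanSpace ℝ (Fin d),
      (inner ℝ y (t • x) : ℝ)
        = inner ℝ ((K.orthogonalProjectionOnto y : K) : EuclideanSpace ℝ (Fin d)) (t • x) := by
    intro y
    have horth : (y - ((K.orthogonalProjectionOnto y : K) : EuclideanSpace ℝ (Fin d))) ∈ Kᗮ :=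
      K.sub_starProjection_mem_orthogonal y
    have h0 : (inner ℝ (y - ((K.orthogonalProjectionOnto y : K) : EuclideanSpace ℝ (Fin d)))
        (t • x) : ℝ) = 0 := (Submodule.mem_orthogonal' K _).mp horth _ hmem
    rw [inner_sub_left] at h0
    linarith
  have key : ∀ (R : Measure (EuclideanSpace ℝ (Fin d))),
      cf R (t • x) = ∫ z : K,
        Complex.exp (((inner ℝ (z : EuclideanSpace ℝ (Fin d)) (t • x) : ℝ) : ℂ) * Complex.I)
        ∂(projLine R x) := by
    intro R
    have hg : AEStronglyMeasurable
        (fun z : K => Complex.exp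
          (((inner ℝ (z : EuclideanSpace ℝ (Fin d)) (t • x) : ℝ) : ℂ) * Complex.I))
        (projLine R x) := by
      refine Continuous.aestronglyMeasurable ?_
      have h1 : Continuous fun z : K => (inner ℝ (z : EuclideanSpace ℝ (Fin d)) (t • x) : ℝ) :=
        Continuous.inner continuous_subtype_val continuous_const
      exact Complex.continuous_exp.comp ((Complex.continuous_ofReal.comp h1).mul continuous_const)
    rw [projLine,
      integral_map (K.orthogonalProjectionOnto).continuous.measurable.aemeasurable hg]
    unfold cf
    congr 1
    funext y
    rw [hinner y]
  rw [key P, key Q, h]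

/-- Two centred elliptical distributions with equal projections along the lines
of a spanning set can be written with a common generator `ψ`. -/
theorem common_generator_of_proj_eq {d : ℕ}
    (P Q : Measure (EuclideanSpace ℝ (Fin d)))
    (Sig₁' Sig₂' : Matrix (Fin d) (Fin d) ℝ) (ψ₁ ψ₂ : ℝ → ℂ)
    (hP : IsElliptical P 0 Sig₁' ψ₁) (hQ : IsElliptical Q 0 Sig₂' ψ₂)
    (S : Set (EuclideanSpace ℝ (Fin d))) (hspan : Submodule.span ℝ S = ⊤)
    (hproj : ∀ x ∈ S, projLine P x = projLine Q x) :
    ∃ (ψ : ℝ → ℂ) (Sig₁ Sig₂ : Matrix (Fin d) (Fin d) ℝ),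
      ContinuousOn ψ (Set.Ici 0) ∧ Sig₁.PosSemidef ∧ Sig₂.PosSemidef ∧
      (∀ ξ, cf P ξ = ψ (qf Sig₁ ξ)) ∧ (∀ ξ, cf Q ξ = ψ (qf Sig₂ ξ)) := by
  obtain ⟨hPprob, hSg1, hψ₁c, hφP⟩ := hP
  obtain ⟨hQprob, hSg2, hψ₂c, hφQ⟩ := hQ
  have hφP' : ∀ ξ, cf P ξ = ψ₁ (qf Sig₁' ξ) := by
    intro ξ
    simpa using hφP ξ
  have hφQ' : ∀ ξ, cf Q ξ = ψ₂ (qf Sig₂' ξ) := by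
    intro ξ
    simpa using hφQ ξ
  -- key relation coming from the equal projections
  have hline : ∀ x ∈ S, ∀ s : ℝ, 0 ≤ s →
      ψ₁ (s * qf Sig₁' x) = ψ₂ (s * qf Sig₂' x) := by
    intro x hx s hs
    have h := cf_line_eq P Q x (hproj x hx) (Real.sqrt s)
    rw [hφP', hφQ', qf_smul_vec, qf_smul_vec, Real.sq_sqrt hs] at h
    exact h
  by_cases hcase1 : ∃ x ∈ S, 0 < qf Sig₁' x ∧ 0 < qf Sig₂' x
  · -- both forms positive somewhere: rescale Sig₂'
    obtain ⟨x, hx, ha, hb⟩ := hcase1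
    set a := qf Sig₁' x
    set b := qf Sig₂' x
    refine ⟨ψ₁, Sig₁', (a / b) • Sig₂', hψ₁c, hSg1,
      posSemidef_smul hSg2 (div_nonneg ha.le hb.le), hφP', ?_⟩
    intro ξ
    rw [hφQ' ξ, qf_smul_matrix]
    set u := qf Sig₂' ξ with hu
    have hu0 : 0 ≤ u := qf_nonneg hSg2 ξ
    have := (hline x hx (u / b) (div_nonneg hu0 hb.le)).symm
    rw [div_mul_cancel₀ u hb.ne'] at this
    rw [this]
    congr 1
    ring
  · push_neg at hcase1
    by_cases hcase2 : ∃ x ∈ S, 0 < qf Sig₁' x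
    · -- ψ₁ is constant on [0,∞)
      obtain ⟨x, hx, ha⟩ := hcase2
      have hb : qf Sig₂' x = 0 :=
        le_antisymm (hcase1 x hx ha) (qf_nonneg hSg2 x)
      refine ⟨ψ₂, 0, Sig₂', hψ₂c, Matrix.PosSemidef.zero, hSg2, ?_, ?_⟩
      · intro ξ
        rw [hφP' ξ, qf_zero_matrix]
        set u := qf Sig₁' ξ with hu
        have hu0 : 0 ≤ u := qf_nonneg hSg1 ξ
        have h := hline x hx (u / qf Sig₁' x) (div_nonneg hu0 ha.le)
        rw [div_mul_cancel₀ u ha.ne', hb, mul_zero] at h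
        exact h
      · exact hφQ'
    · push_neg at hcase2
      have ha0 : ∀ x ∈ S, qf Sig₁' x = 0 := fun x hx =>
        le_antisymm (hcase2 x hx) (qf_nonneg hSg1 x)
      by_cases hcase3 : ∃ x ∈ S, 0 < qf Sig₂' x
      · -- ψ₂ is constant on [0,∞)
        obtain ⟨x, hx, hb⟩ := hcase3
        refine ⟨ψ₁, Sig₁', 0, hψ₁c, hSg1, Matrix.PosSemidef.zero, hφP', ?_⟩
        intro ξ
        rw [hφQ' ξ, qf_zero_matrix]
        set u := qf Sig₂' ξ with hu
        have hu0 : 0 ≤ u := qf_nonneg hSg2 ξ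
        have h := hline x hx (u / qf Sig₂' x) (div_nonneg hu0 hb.le)
        rw [div_mul_cancel₀ u hb.ne', ha0 x hx, mul_zero] at h
        exact h.symm
      · -- both forms vanish on `S`, hence everywhere
        push_neg at hcase3
        have hb0 : ∀ x ∈ S, qf Sig₂' x = 0 := fun x hx =>
          le_antisymm (hcase3 x hx) (qf_nonneg hSg2 x)
        have hq1 : ∀ ξ, qf Sig₁' ξ = 0 := qf_eq_zero_of_span hSg1 hspan ha0
        have hq2 : ∀ ξ, qf Sig₂' ξ = 0 := qf_eq_zero_of_span hSg2 hspan hb0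
        have hψ10 : ψ₁ 0 = 1 := by
          have := hφP' 0
          rw [hq1 0, cf_zero P] at this
          exact this.symm
        have hψ20 : ψ₂ 0 = 1 := by
          have := hφQ' 0
          rw [hq2 0, cf_zero Q] at this
          exact this.symm
        refine ⟨ψ₁, 0, 0, hψ₁c, Matrix.PosSemidef.zero, Matrix.PosSemidef.zero, ?_, ?_⟩
        · intro ξ
          rw [hφP' ξ, hq1 ξ, qf_zero_matrix]
        · intro ξ
          rw [hφQ' ξ, hq2 ξ, qf_zero_matrix, hψ10, hψ20]
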